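/- Let M be a nonempty L-structure, I a nonempty set, and F a (proper) filter on I. Then the diagonal map δ : M → M^I/F into the reduced power, sending a ∈ M to the class ⟨a⟩/F of the constant I-sequence with value a, is a pure L-embedding: δ is injective and for every existential-positive L-formula φ(v̄) and every tuple ā from M, M ⊨ φ[ā] if and only if M^I/F ⊨ φ[δ(ā)]. -/

import Mathlib

open FirstOrder Language Filter Structure

universe u v w

namespace FirstOrder.Language.BoundedFormula

variable {L : FirstOrder.Language.{u, v}} {α : Type*}

/-- Existential-positive formulas: built from atomic formulas using `⊓`, `⊔` and `∃`. -/
inductive IsExistentialPositive : ∀ {n : ℕ}, L.BoundedFormula α n → Prop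
  | equal {n : ℕ} (t₁ t₂ : L.Term (α ⊕ Fin n)) : IsExistentialPositive (t₁.bdEqual t₂)
  | rel {n k : ℕ} (R : L.Relations k) (ts : Fin k → L.Term (α ⊕ Fin n)) :
      IsExistentialPositive (R.boundedFormula ts)
  | inf {n : ℕ} {φ ψ : L.BoundedFormula α n} :
      IsExistentialPositive φ → IsExistentialPositive ψ → IsExistentialPositive (φ ⊓ ψ)
  | sup {n : ℕ} {φ ψ : L.BoundedFormula α n} :
      IsExistentialPositive φ → IsExistentialPositive ψ → IsExistentialPositive (φ ⊔ ψ)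
  | ex {n : ℕ} {φ : L.BoundedFormula α (n + 1)} :
      IsExistentialPositive φ → IsExistentialPositive φ.ex

end FirstOrder.Language.BoundedFormula

namespace ReducedPower

variable {L : FirstOrder.Language.{u, v}} {I : Type*} (M : I → Type*)
  [∀ i, L.Structure (M i)] (F : Filter I)

/-- The reduced-product prestructure on the product, relative to the filter `F`. -/
instance prestructure : L.Prestructure (F.productSetoid M) :=
  { F.productSetoid M with
    toStructure :=
      { funMap := fun {_} f x a => funMap f fun i => x i a
        RelMap := fun {_} r x => ∀ᶠ a in F, RelMap r fun i => x i a }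
    fun_equiv := fun {n} f x y xy => by
      refine mem_of_superset (iInter_mem.2 xy) fun a ha => ?_
      simp only [Set.mem_iInter, Set.mem_setOf_eq] at ha
      simp only [Set.mem_setOf_eq, ha]
    rel_equiv := fun {n} r x y xy => by
      rw [← iff_eq_eq]
      refine ⟨fun hx => ?_, fun hy => ?_⟩
      · refine mem_of_superset (inter_mem hx (iInter_mem.2 xy)) ?_
        rintro a ⟨ha1, ha2⟩
        simp only [Set.mem_iInter, Set.mem_setOf_eq] at *
        rw [← funext ha2]
        exact ha1
      · refine mem_of_superset (inter_mem hy (iInter_mem.2 xy)) ?_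
        rintro a ⟨ha1, ha2⟩
        simp only [Set.mem_iInter, Set.mem_setOf_eq] at *
        rw [funext ha2]
        exact ha1 }

/-- The reduced product `L`-structure on `F.Product M`. -/
instance productStructure : L.Structure (F.Product M) :=
  Language.quotientStructure

variable {M F}

theorem term_realize_cast' {β : Type*} (x : β → ∀ a, M a) (t : L.Term β) :
    (t.realize fun i => (x i : F.Product M)) =
      (fun a => t.realize fun i => x i a : F.Product M) := by
  convert @Term.realize_quotient_mk' L _ (F.productSetoid M)
      (ReducedPower.prestructure M F) _ t x using 2
  case e'_2 => rfl
  refine congrArg (Quotient.mk _) ?_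
  ext a
  induction t with
  | var => rfl
  | func _ _ t_ih => simp only [Term.realize, t_ih]; rfl

theorem snoc_cast {n : ℕ} (v : Fin n → ∀ a, M a) (g : ∀ a, M a) (a : I) :
    (fun i : Fin (n + 1) => (Fin.snoc v g : Fin (n + 1) → ∀ a, M a) i a) =
      Fin.snoc (fun i => v i a) (g a) := by
  ext i
  refine Fin.lastCases ?_ (fun j => ?_) i <;> simp

/-- Downward (reflection) half of Łoś for existential-positive formulas in reduced products. -/
theorem realize_of_realize_cast {β : Type*} {n : ℕ} {φ : L.BoundedFormula β n}
    (h : φ.IsExistentialPositive) (x : β → ∀ a, M a) (v : Fin n → ∀ a, M a)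
    (hφ : φ.Realize (fun i : β => (x i : F.Product M)) fun i => (v i : F.Product M)) :
    ∀ᶠ a in F, φ.Realize (fun i : β => x i a) fun i => v i a := by
  induction h generalizing x with
  | @equal n t₁ t₂ =>
    rw [BoundedFormula.realize_bdEqual] at hφ
    have h2 : (Sum.elim (fun i : β => (x i : F.Product M)) fun i => (v i : F.Product M)) =
        fun i => ((Sum.elim x v i : ∀ a, M a) : F.Product M) := by
      ext i; cases i <;> rfl
    rw [h2, term_realize_cast', term_realize_cast'] at hφ
    have := Quotient.exact' hφ
    refine this.mono fun a ha => ?_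
    rw [BoundedFormula.realize_bdEqual]
    convert ha using 2 <;> · ext i; cases i <;> rfl
  | @rel n k R ts =>
    rw [BoundedFormula.realize_rel] at hφ
    have h2 : (Sum.elim (fun i : β => (x i : F.Product M)) fun i => (v i : F.Product M)) =
        fun i => ((Sum.elim x v i : ∀ a, M a) : F.Product M) := by
      ext i; cases i <;> rfl
    rw [h2] at hφ
    simp only [term_realize_cast'] at hφ
    have := (relMap_quotient_mk' (s := F.productSetoid M) R
      (fun i => fun a => (ts i).realize fun p => Sum.elim x v p a)).mp hφ
    refine this.mono fun a ha => ?_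
    rw [BoundedFormula.realize_rel]
    convert ha using 2
    congr 1
    funext p; cases p <;> rfl
  | inf _ _ ih₁ ih₂ =>
    rw [BoundedFormula.realize_inf] at hφ
    exact ((ih₁ x v hφ.1).and (ih₂ x v hφ.2)).mono fun a ha =>
      BoundedFormula.realize_inf.mpr ha
  | sup _ _ ih₁ ih₂ =>
    rw [BoundedFormula.realize_sup] at hφ
    rcases hφ with h | h
    · exact (ih₁ x v h).mono fun a ha => BoundedFormula.realize_sup.mpr (Or.inl ha)
    · exact (ih₂ x v h).mono fun a ha => BoundedFormula.realize_sup.mpr (Or.inr ha)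
  | @ex n ψ _ ih =>
    rw [BoundedFormula.realize_ex] at hφ
    obtain ⟨c, hc⟩ := hφ
    obtain ⟨g, rfl⟩ := Quotient.exists_rep c
    have h2 : Fin.snoc (fun i => (v i : F.Product M)) (⟦g⟧ : F.Product M) =
        fun i : Fin (n + 1) => (((Fin.snoc v g : Fin (n + 1) → ∀ a, M a) i) : F.Product M) := by
      funext i
      refine Fin.lastCases ?_ (fun j => ?_) i
      · simp only [Fin.snoc_last]; rfl
      · simp only [Fin.snoc_castSucc]
    rw [h2] at hc
    refine (ih x (Fin.snoc v g) hc).mono fun a ha => ?_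
    rw [BoundedFormula.realize_ex]
    exact ⟨g a, by rwa [← snoc_cast]⟩

end ReducedPower

section Diagonal

variable {L : FirstOrder.Language.{u, v}} {M : Type*} [L.Structure M]
  {I : Type w} {F : Filter I}

/-- The diagonal element. -/
local notation "δ" => fun a : M => ((fun _ : I => a) : F.Product (fun _ : I => M))

theorem term_realize_diag {β : Type*} (y : β → M) (t : L.Term β) :
    (t.realize fun p => δ (y p)) = δ (t.realize y) :=
  ReducedPower.term_realize_cast' (fun p => fun _ : I => y p) t

/-- Upward (preservation) half for existential-positive formulas along the diagonal. -/
theorem realize_cast_of_realize {β : Type*} {n : ℕ} {φ : L.BoundedFormula β n}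
    (h : φ.IsExistentialPositive) (b : β → M) (w : Fin n → M)
    (hφ : φ.Realize b w) :
    φ.Realize (fun p => δ (b p)) fun i => δ (w i) := by
  induction h generalizing b with
  | @equal n t₁ t₂ =>
    rw [BoundedFormula.realize_bdEqual] at hφ ⊢
    have h2 : (Sum.elim (fun p : β => δ (b p)) fun i => δ (w i)) =
        fun p => δ (Sum.elim b w p) := by ext p; cases p <;> rfl
    rw [h2, term_realize_diag, term_realize_diag, hφ]
  | @rel n k R ts =>
    rw [BoundedFormula.realize_rel] at hφ ⊢
    have h2 : (Sum.elim (fun p : β => δ (b p)) fun i => δ (w i)) =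
        fun p => δ (Sum.elim b w p) := by ext p; cases p <;> rfl
    rw [h2]
    simp only [term_realize_diag]
    exact (relMap_quotient_mk' (s := F.productSetoid fun _ : I => M) R
      (fun i => fun _ : I => (ts i).realize (Sum.elim b w))).mpr
      (Eventually.of_forall fun a => hφ)
  | inf _ _ ih₁ ih₂ =>
    rw [BoundedFormula.realize_inf] at hφ ⊢
    exact ⟨ih₁ b w hφ.1, ih₂ b w hφ.2⟩
  | sup _ _ ih₁ ih₂ =>
    rw [BoundedFormula.realize_sup] at hφ ⊢
    exact hφ.imp (ih₁ b w) (ih₂ b w)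
  | @ex n ψ _ ih =>
    rw [BoundedFormula.realize_ex] at hφ ⊢
    obtain ⟨c, hc⟩ := hφ
    refine ⟨δ c, ?_⟩
    have := ih b (Fin.snoc w c) hc
    convert this using 1
    ext i
    refine Fin.lastCases ?_ (fun j => ?_) i <;> simp

end Diagonal

/-- The diagonal map `δ : M → M^I/F` into a reduced power of a nonempty structure `M` by a proper
filter `F`, sending `a` to the class of the constant `I`-sequence with value `a`, is a pure
`L`-embedding: it is injective and it preserves and reflects the satisfaction of all
existential-positive formulas. -/
theorem diagonal_pure_embedding {L : FirstOrder.Language.{u, v}} {M : Type*} [L.Structure M]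
    [Nonempty M] {I : Type w} [Nonempty I] (F : Filter I) [F.NeBot] :
    Function.Injective
      (fun a : M => ((fun _ : I => a) : F.Product (fun _ : I => M))) ∧
    ∀ {n : ℕ} (φ : L.Formula (Fin n)), φ.IsExistentialPositive →
      ∀ a : Fin n → M, φ.Realize a ↔
        φ.Realize (fun p => ((fun _ : I => a p) : F.Product (fun _ : I => M))) := by
  constructor
  · intro a b hab
    have h := Quotient.exact' hab
    exact eventually_const.mp h
  · intro n φ hφ a
    constructor
    · intro h
      have h' := realize_cast_of_realize (F := F) hφ a (default : Fin 0 → M) h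
      unfold Formula.Realize
      have e : (fun i : Fin 0 => ((fun _ : I => (default : Fin 0 → M) i) :
          F.Product (fun _ : I => M))) = default := Subsingleton.elim _ _
      rw [e] at h'
      exact h'
    · intro h
      unfold Formula.Realize at h
      have h' := ReducedPower.realize_of_realize_cast (F := F) hφ (fun p => fun _ : I => a p)
        (default : Fin 0 → ∀ _ : I, M) ?_
      · obtain ⟨i, hi⟩ := h'.exists
        unfold Formula.Realize
        convert hi using 1
      · convert h using 1
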